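/- Let H : ℝ³ → ℝ be Lipschitz with constant L. Let u, v be affine functions on a triangle K ⊂ ℝ² with vertices x₁, x₂, x₃ such that v(xᵢ) ≥ u(xᵢ) for all i. Then |H(∇v) − H(∇u)| ≤ L·C(K)·Σᵢ (v(xᵢ) − u(xᵢ)), where C(K) > 0 depends only on the geometry of K (it can be taken as the inverse of the inradius of K times an absolute constant). -/

import Mathlib

open RealInnerProductSpace

/-- Monotonicity-type estimate for the numerical Hamiltonian: for a nondegenerate
triangle K with vertices x₁, x₂, x₃ there is C(K) > 0 such that for every L-Lipschitz H
and affine u, v with u(xᵢ) ≤ v(xᵢ),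
|H(∇v) − H(∇u)| ≤ L·C(K)·Σᵢ (v(xᵢ) − u(xᵢ)). -/
theorem hamiltonian_affine_gradient_bound
    (x₁ x₂ x₃ : EuclideanSpace ℝ (Fin 2))
    (hnd : AffineIndependent ℝ ![x₁, x₂, x₃]) :
    ∃ CK : ℝ, 0 < CK ∧
      ∀ (L : ℝ), 0 ≤ L →
      ∀ H : EuclideanSpace ℝ (Fin 2) → ℝ, LipschitzWith (Real.toNNReal L) H →
      ∀ (u v : EuclideanSpace ℝ (Fin 2) →ᵃ[ℝ] ℝ)
        (gu gv : EuclideanSpace ℝ (Fin 2)),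
        (∀ w, u.linear w = ⟪gu, w⟫) → (∀ w, v.linear w = ⟪gv, w⟫) →
        u x₁ ≤ v x₁ → u x₂ ≤ v x₂ → u x₃ ≤ v x₃ →
        |H gv - H gu| ≤ L * CK * ((v x₁ - u x₁) + (v x₂ - u x₂) + (v x₃ - u x₃)) := by
  classical
  set e₂ : EuclideanSpace ℝ (Fin 2) := x₂ - x₁ with he₂
  set e₃ : EuclideanSpace ℝ (Fin 2) := x₃ - x₁ with he₃
  -- linear independence of the edge vectors
  have hli : LinearIndependent ℝ ![e₂, e₃] := by
    rw [affineIndependent_iff_linearIndependent_vsub ℝ ![x₁, x₂, x₃] 0] at hnd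
    have hf : Function.Injective (![⟨1, by decide⟩, ⟨2, by decide⟩] :
        Fin 2 → {x : Fin 3 // x ≠ 0}) := by
      intro a b hab
      fin_cases a <;> fin_cases b <;> simp_all
    have h := hnd.comp _ hf
    convert h using 1
    funext i
    fin_cases i <;> simp [he₂, he₃]
    rfl
  -- span is the whole space
  have hspan : Submodule.span ℝ (Set.range ![e₂, e₃]) = ⊤ := by
    apply hli.span_eq_top_of_card_eq_finrank
    simp [finrank_euclideanSpace_fin]
  -- key: vanishing inner products imply zero
  have hzero : ∀ g : EuclideanSpace ℝ (Fin 2), ⟪g, e₂⟫ = 0 → ⟪g, e₃⟫ = 0 → g = 0 := by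
    intro g h2 h3
    have hg : g ∈ Submodule.span ℝ (Set.range ![e₂, e₃]) := hspan ▸ Submodule.mem_top
    rw [Submodule.mem_span_range_iff_exists_fun] at hg
    obtain ⟨c, hc⟩ := hg
    have h2' : ⟪e₂, g⟫ = 0 := by rw [real_inner_comm]; exact h2
    have h3' : ⟪e₃, g⟫ = 0 := by rw [real_inner_comm]; exact h3
    have h0 : ⟪g, g⟫ = 0 := by
      nth_rewrite 1 [← hc]
      rw [Fin.sum_univ_two]
      simp only [Matrix.cons_val_zero, Matrix.cons_val_one, Matrix.head_cons]
      rw [inner_add_left, real_inner_smul_left, real_inner_smul_left, h2', h3']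
      ring
    exact inner_self_eq_zero.mp h0
  -- the linear map g ↦ (⟪e₂,g⟫, ⟪e₃,g⟫)
  set T : EuclideanSpace ℝ (Fin 2) →ₗ[ℝ] ℝ × ℝ :=
    LinearMap.prod ((innerSL ℝ e₂ : EuclideanSpace ℝ (Fin 2) →L[ℝ] ℝ) : EuclideanSpace ℝ (Fin 2) →ₗ[ℝ] ℝ)
      ((innerSL ℝ e₃ : EuclideanSpace ℝ (Fin 2) →L[ℝ] ℝ) : EuclideanSpace ℝ (Fin 2) →ₗ[ℝ] ℝ) with hT
  have hTapp : ∀ g : EuclideanSpace ℝ (Fin 2), T g = (⟪e₂, g⟫, ⟪e₃, g⟫) := fun g => rfl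
  have hinj : Function.Injective T := by
    rw [← LinearMap.ker_eq_bot]
    ext g
    simp only [LinearMap.mem_ker, Submodule.mem_bot]
    constructor
    · intro hg
      have h2 : ⟪e₂, g⟫ = 0 := congrArg Prod.fst hg
      have h3 : ⟪e₃, g⟫ = 0 := congrArg Prod.snd hg
      exact hzero g (by rwa [real_inner_comm]) (by rwa [real_inner_comm])
    · rintro rfl; simp [hTapp]
  have hsurj : Function.Surjective T :=
    (LinearMap.injective_iff_surjective_of_finrank_eq_finrank
      (by simp [finrank_euclideanSpace_fin])).mp hinj
  let e : EuclideanSpace ℝ (Fin 2) ≃ₗ[ℝ] ℝ × ℝ := LinearEquiv.ofBijective T ⟨hinj, hsurj⟩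
  let ec := e.toContinuousLinearEquiv
  set M : ℝ := ‖(ec.symm : (ℝ × ℝ) →L[ℝ] EuclideanSpace ℝ (Fin 2))‖ with hM
  have hM0 : 0 ≤ M := norm_nonneg _
  refine ⟨M + 1, by linarith, ?_⟩
  intro L hL H hH u v gu gv hu hv h1 h2 h3
  set g : EuclideanSpace ℝ (Fin 2) := gv - gu with hg
  set S : ℝ := (v x₁ - u x₁) + (v x₂ - u x₂) + (v x₃ - u x₃) with hS
  have d1 : 0 ≤ v x₁ - u x₁ := sub_nonneg.mpr h1
  have d2 : 0 ≤ v x₂ - u x₂ := sub_nonneg.mpr h2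
  have d3 : 0 ≤ v x₃ - u x₃ := sub_nonneg.mpr h3
  have hS0 : 0 ≤ S := by rw [hS]; linarith
  -- inner products of g with edge vectors
  have key : ∀ (x y : EuclideanSpace ℝ (Fin 2)),
      ⟪g, y - x⟫ = (v y - u y) - (v x - u x) := by
    intro x y
    have hvv : v.linear (y - x) = v y - v x := by
      have h := v.linearMap_vsub y x; simpa using h
    have huu : u.linear (y - x) = u y - u x := by
      have h := u.linearMap_vsub y x; simpa using h
    rw [hg, inner_sub_left, ← hv, ← hu, hvv, huu]; ring
  have k2 : ⟪g, e₂⟫ = (v x₂ - u x₂) - (v x₁ - u x₁) := key x₁ x₂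
  have k3 : ⟪g, e₃⟫ = (v x₃ - u x₃) - (v x₁ - u x₁) := key x₁ x₃
  have habs2 : |⟪g, e₂⟫| ≤ S := by
    rw [k2, hS, abs_le]; constructor <;> linarith
  have habs3 : |⟪g, e₃⟫| ≤ S := by
    rw [k3, hS, abs_le]; constructor <;> linarith
  have hTg : ‖T g‖ ≤ S := by
    rw [hTapp, Prod.norm_def]
    simp only [Real.norm_eq_abs]
    have a2 : |⟪e₂, g⟫| ≤ S := by rw [real_inner_comm]; exact habs2
    have a3 : |⟪e₃, g⟫| ≤ S := by rw [real_inner_comm]; exact habs3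
    exact max_le a2 a3
  have hgnorm : ‖g‖ ≤ M * S := by
    calc ‖g‖ = ‖ec.symm (ec g)‖ := by rw [ec.symm_apply_apply]
      _ ≤ M * ‖ec g‖ := (ec.symm : (ℝ × ℝ) →L[ℝ] EuclideanSpace ℝ (Fin 2)).le_opNorm _
      _ = M * ‖T g‖ := rfl
      _ ≤ M * S := mul_le_mul_of_nonneg_left hTg hM0
  have hlip : |H gv - H gu| ≤ L * ‖g‖ := by
    have h := hH.dist_le_mul gv gu
    rw [Real.dist_eq, dist_eq_norm] at h
    calc |H gv - H gu| ≤ (Real.toNNReal L : ℝ) * ‖gv - gu‖ := h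
      _ = L * ‖g‖ := by rw [Real.coe_toNNReal L hL, hg]
  calc |H gv - H gu| ≤ L * ‖g‖ := hlip
    _ ≤ L * (M * S) := mul_le_mul_of_nonneg_left hgnorm hL
    _ ≤ L * ((M + 1) * S) := by nlinarith
    _ = L * (M + 1) * S := by ring
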